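/- Stationarity of the softmax over coherence under Gibbs sampling: assume σ has full support and let β > 0. Then for every d-policy π', Σ over all d-policies π of X^β(π)·K^β(π,π') equals X^β(π'); i.e., X^β is a stationary distribution of the Gibbs transition kernel K^β. -/

import Mathlib

open Finset

/-- A learning system: a commutative additive monoid `M` of stochastic policies,
a finite nonempty set `S` of contexts, a finite nonempty behavior set `A s` for each
context `s`, and an inference function `inf` assigning to each policy and context a
probability mass function on the behaviors of that context, satisfying the chain rule. -/
structure LearningSystem (M : Type) [AddCommMonoid M] (S : Type) [Fintype S] [DecidableEq S] :
    Type where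
  A : S → Finset M
  A_nonempty : ∀ s, (A s).Nonempty
  inf : M → S → M → ℝ
  inf_nonneg : ∀ φ s a, 0 ≤ inf φ s a
  inf_eq_zero_of_not_mem : ∀ φ s a, a ∉ A s → inf φ s a = 0
  inf_sum_one : ∀ φ s, ∑ a ∈ A s, inf φ s a = 1
  chain_rule : ∀ (φ : M) (s₁ s₂ : S) (a₁ a₂ : M), a₁ ∈ A s₁ → a₂ ∈ A s₂ →
    inf φ s₁ a₁ * inf (φ + a₁) s₂ a₂ = inf φ s₂ a₂ * inf (φ + a₂) s₁ a₁

namespace LearningSystem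

variable {M S : Type} [AddCommMonoid M] [Fintype S] [DecidableEq S]

/-- A deterministic policy (d-policy): an assignment of a behavior `π s ∈ A s` to
every context `s ∈ S`. -/
abbrev DPolicy (L : LearningSystem M S) : Type := ∀ s : S, {a : M // a ∈ L.A s}

/-- `σ` has full support: every behavior of every context has positive probability
under every prior policy. -/
def FullSupport (L : LearningSystem M S) : Prop :=
  ∀ (φ : M) (s : S) (a : M), a ∈ L.A s → 0 < L.inf φ s a

/-- The coherence of a d-policy `π` relative to the prior policy `φ`, computed along
the enumeration `f` of contexts:
`∑ n, log₂ σ(φ + ∑_{m<n} π(f m), f n)(π (f n))`. -/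
noncomputable def cohAlong (L : LearningSystem M S) (φ : M) (π : L.DPolicy)
    {k : ℕ} (f : Fin k → S) : ℝ :=
  ∑ n : Fin k, Real.logb 2
    (L.inf (φ + ∑ m ∈ Finset.univ.filter (fun m => m < n), ((π (f m) : M)))
      (f n) ((π (f n) : M)))

/-- The product `∏ n, σ(φ + ∑_{m<n} π(f m), f n)(π (f n))` along the enumeration `f`. -/
noncomputable def prodAlong (L : LearningSystem M S) (φ : M) (π : L.DPolicy)
    {k : ℕ} (f : Fin k → S) : ℝ :=
  ∏ n : Fin k,
    L.inf (φ + ∑ m ∈ Finset.univ.filter (fun m => m < n), ((π (f m) : M)))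
      (f n) ((π (f n) : M))

/-- The coherence `χ(π)` (relative to the zero prior policy), with respect to the fixed
enumeration `e` of the contexts. -/
noncomputable def coherence (L : LearningSystem M S) {k : ℕ} (e : Fin k ≃ S)
    (π : L.DPolicy) : ℝ :=
  L.cohAlong 0 π ⇑e

/-- The softmax over coherence at inverse temperature `β`:
`X^β(π) = 2^(β χ(π)) / ∑_{π'} 2^(β χ(π'))`. -/
noncomputable def softmaxCoh (L : LearningSystem M S) {k : ℕ} (e : Fin k ≃ S) (β : ℝ)
    (π : L.DPolicy) : ℝ :=
  (2 : ℝ) ^ (β * L.coherence e π) / ∑ π' : L.DPolicy, (2 : ℝ) ^ (β * L.coherence e π')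

/-- The tempered inference function `σ^β(φ,s)(a) = σ(φ,s)(a)^β / ∑_{a'∈A_s} σ(φ,s)(a')^β`. -/
noncomputable def sigmaBeta (L : LearningSystem M S) (β : ℝ) (φ : M) (s : S) (a : M) : ℝ :=
  L.inf φ s a ^ β / ∑ a' ∈ L.A s, L.inf φ s a' ^ β

/-- The Gibbs transition kernel on d-policies:
`K^β(π,π') = (1/k) ∑_n 1[π'(s_m) = π(s_m) ∀ m ≠ n] · σ^β(∑_{m≠n} π(s_m), s_n)(π'(s_n))`. -/
noncomputable def gibbsKernel [DecidableEq M] (L : LearningSystem M S) {k : ℕ}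
    (e : Fin k ≃ S) (β : ℝ) (π π' : L.DPolicy) : ℝ :=
  ((k : ℝ))⁻¹ * ∑ n : Fin k,
    if ∀ m : Fin k, m ≠ n → π' (e m) = π (e m) then
      L.sigmaBeta β (∑ m ∈ Finset.univ.erase n, ((π (e m) : M))) (e n) ((π' (e n) : M))
    else 0

end LearningSystem

namespace LearningSystem

variable {M S : Type} [AddCommMonoid M] [Fintype S] [DecidableEq S]

noncomputable def prodList (L : LearningSystem M S) (π : L.DPolicy) : M → List S → ℝ
  | _, [] => 1
  | φ, s :: t => L.inf φ s (π s) * L.prodList π (φ + (π s : M)) t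

lemma prodList_perm (L : LearningSystem M S) (π : L.DPolicy) {l₁ l₂ : List S}
    (h : l₁.Perm l₂) : ∀ φ, L.prodList π φ l₁ = L.prodList π φ l₂ := by
  induction h with
  | nil => intro φ; rfl
  | cons x _ ih => intro φ; simp only [prodList, ih]
  | swap x y l =>
      intro φ
      simp only [prodList]
      rw [← mul_assoc, ← mul_assoc, L.chain_rule φ y x (π y) (π x) (π y).2 (π x).2,
        add_right_comm]
  | trans _ _ ih₁ ih₂ => intro φ; rw [ih₁, ih₂]

lemma prodList_append (L : LearningSystem M S) (π : L.DPolicy) (l₂ : List S) :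
    ∀ (l₁ : List S) (φ : M), L.prodList π φ (l₁ ++ l₂) =
      L.prodList π φ l₁ * L.prodList π (φ + (l₁.map (fun s => (π s : M))).sum) l₂ := by
  intro l₁
  induction l₁ with
  | nil => intro φ; simp [prodList]
  | cons s t ih =>
      intro φ
      simp only [List.cons_append, prodList, List.map_cons, List.sum_cons, mul_assoc,
        add_assoc]
      rw [ih, add_assoc]

lemma prodList_congr (L : LearningSystem M S) (π π' : L.DPolicy) :
    ∀ (l : List S), (∀ s ∈ l, π s = π' s) → ∀ φ, L.prodList π φ l = L.prodList π' φ l := by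
  intro l
  induction l with
  | nil => intro _ _; rfl
  | cons s t ih =>
      intro h φ
      simp only [prodList, h s (by simp), ih (fun x hx => h x (by simp [hx]))]

lemma prodList_pos (L : LearningSystem M S) (hfs : L.FullSupport) (π : L.DPolicy) :
    ∀ (l : List S) (φ : M), 0 < L.prodList π φ l := by
  intro l
  induction l with
  | nil => intro φ; exact one_pos
  | cons s t ih => intro φ; exact mul_pos (hfs φ s (π s) (π s).2) (ih _)

lemma filter_succ_sum {k : ℕ} (g : Fin (k + 1) → M) (n : Fin k) :
    ∑ m ∈ Finset.univ.filter (fun m => m < n.succ), g m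
      = g 0 + ∑ m ∈ Finset.univ.filter (fun m => m < n), g m.succ := by
  rw [Finset.sum_filter, Finset.sum_filter, Fin.sum_univ_succ]
  simp [Fin.succ_lt_succ_iff, Fin.succ_pos]

lemma prodAlong_eq_prodList (L : LearningSystem M S) (π : L.DPolicy) :
    ∀ {k : ℕ} (f : Fin k → S) (φ : M), L.prodAlong φ π f = L.prodList π φ (List.ofFn f) := by
  intro k
  induction k with
  | zero => intro f φ; simp [prodAlong, prodList, List.ofFn_zero]
  | succ k ih =>
      intro f φ
      rw [List.ofFn_succ]
      simp only [prodList, ← ih]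
      rw [prodAlong, Fin.prod_univ_succ, prodAlong]
      congr 1
      · congr 1
        have : (Finset.univ.filter (fun m : Fin (k+1) => m < 0)) = ∅ := by
          ext m; simp
        rw [this]
        simp
      · refine Finset.prod_congr rfl fun n _ => ?_
        rw [filter_succ_sum (fun m => ((π (f m) : M))) n, ← add_assoc]

end LearningSystem

namespace LearningSystem

variable {M S : Type} [AddCommMonoid M] [Fintype S] [DecidableEq S]

lemma two_rpow_coherence (L : LearningSystem M S) (hfs : L.FullSupport) {k : ℕ}
    (e : Fin k ≃ S) (β : ℝ) (π : L.DPolicy) :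
    (2 : ℝ) ^ (β * L.coherence e π) = (L.prodAlong 0 π ⇑e) ^ β := by
  have hpos : 0 < L.prodAlong 0 π ⇑e :=
    Finset.prod_pos fun n _ => hfs _ _ _ (π _).2
  have hcoh : L.coherence e π = Real.logb 2 (L.prodAlong 0 π ⇑e) := by
    rw [coherence, cohAlong, prodAlong, Real.logb_prod]
    exact fun n _ => (hfs _ _ _ (π _).2).ne'
  rw [hcoh, mul_comm, Real.rpow_mul (by norm_num),
    Real.rpow_logb (by norm_num) (by norm_num) hpos]

lemma prodAlong_decomp (L : LearningSystem M S) (π : L.DPolicy) {k : ℕ}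
    (e : Fin k ≃ S) (n : Fin k) :
    L.prodAlong 0 π ⇑e =
      L.prodList π 0 ((List.ofFn ⇑e).erase (e n)) *
        L.inf (∑ m ∈ Finset.univ.erase n, ((π (e m) : M))) (e n) ((π (e n) : M)) := by
  have hmem : e n ∈ List.ofFn ⇑e := by
    rw [List.mem_ofFn]; exact ⟨n, rfl⟩
  have hnd : (List.ofFn ⇑e).Nodup := (List.nodup_ofFn).mpr e.injective
  have hperm : (List.ofFn ⇑e).Perm ((List.ofFn ⇑e).erase (e n) ++ [e n]) :=
    (List.perm_cons_erase hmem).trans (List.perm_append_singleton _ _).symm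
  rw [L.prodAlong_eq_prodList π ⇑e 0, L.prodList_perm π hperm, L.prodList_append]
  have htf : ((List.ofFn ⇑e).erase (e n)).toFinset = Finset.univ.erase (e n) := by
    ext s
    simp [List.Nodup.mem_erase_iff hnd, List.mem_ofFn, eq_comm]
    intro _; exact ⟨e.symm s, by simp⟩
  have hsum : ((((List.ofFn ⇑e).erase (e n)).map (fun s => ((π s : M)))).sum : M)
      = ∑ m ∈ Finset.univ.erase n, ((π (e m) : M)) := by
    rw [← List.sum_toFinset _ (hnd.erase _), htf]
    refine (Finset.sum_equiv e (fun i => ?_) (fun i _ => rfl)).symm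
    simp [Finset.mem_erase, e.injective.ne_iff]
  rw [hsum]
  simp [prodList]

lemma detailed_balance (L : LearningSystem M S) (hfs : L.FullSupport) {k : ℕ}
    (e : Fin k ≃ S) (β : ℝ) (n : Fin k) (π π' : L.DPolicy)
    (h : ∀ m, m ≠ n → π' (e m) = π (e m)) :
    (2 : ℝ) ^ (β * L.coherence e π) *
        L.inf (∑ m ∈ Finset.univ.erase n, ((π (e m) : M))) (e n) ((π' (e n) : M)) ^ β =
      (2 : ℝ) ^ (β * L.coherence e π') *
        L.inf (∑ m ∈ Finset.univ.erase n, ((π (e m) : M))) (e n) ((π (e n) : M)) ^ β := by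
  set φ : M := ∑ m ∈ Finset.univ.erase n, ((π (e m) : M)) with hφ
  have hφ' : (∑ m ∈ Finset.univ.erase n, ((π' (e m) : M))) = φ :=
    Finset.sum_congr rfl fun m hm => by rw [h m (Finset.ne_of_mem_erase hm)]
  have hnd : (List.ofFn ⇑e).Nodup := (List.nodup_ofFn).mpr e.injective
  have hQ : L.prodList π 0 ((List.ofFn ⇑e).erase (e n))
      = L.prodList π' 0 ((List.ofFn ⇑e).erase (e n)) := by
    refine L.prodList_congr π π' _ (fun s hs => ?_) 0
    have hs' : s ≠ e n := ((List.Nodup.mem_erase_iff hnd).mp hs).1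
    have := h (e.symm s) (fun hc => hs' (by rw [← e.apply_symm_apply s, hc]))
    rw [e.apply_symm_apply] at this
    exact this.symm
  rw [L.two_rpow_coherence hfs e β π, L.two_rpow_coherence hfs e β π',
    L.prodAlong_decomp π e n, L.prodAlong_decomp π' e n, hQ, hφ']
  set Q := L.prodList π' 0 ((List.ofFn ⇑e).erase (e n)) with hQdef
  have hQpos : 0 < Q := L.prodList_pos hfs π' _ _
  rw [Real.mul_rpow hQpos.le (L.inf_nonneg _ _ _),
    Real.mul_rpow hQpos.le (L.inf_nonneg _ _ _)]
  ring

lemma sigmaBeta_sum (L : LearningSystem M S) (hfs : L.FullSupport) (β : ℝ) (φ : M) (s : S) :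
    ∑ a ∈ L.A s, L.sigmaBeta β φ s a = 1 := by
  have hD : 0 < ∑ a' ∈ L.A s, L.inf φ s a' ^ β :=
    Finset.sum_pos (fun a ha => Real.rpow_pos_of_pos (hfs φ s a ha) β) (L.A_nonempty s)
  simp only [sigmaBeta]
  rw [← Finset.sum_div, div_self hD.ne']

end LearningSystem

namespace LearningSystem

variable {M S : Type} [AddCommMonoid M] [Fintype S] [DecidableEq S]

lemma sum_ite_update [DecidableEq M] (L : LearningSystem M S) {k : ℕ} (e : Fin k ≃ S)
    (π' : L.DPolicy) (n : Fin k) (F : {a : M // a ∈ L.A (e n)} → ℝ) :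
    ∑ π : L.DPolicy, (if ∀ m, m ≠ n → π' (e m) = π (e m) then F (π (e n)) else 0)
      = ∑ a : {a : M // a ∈ L.A (e n)}, F a := by
  classical
  set u : {a : M // a ∈ L.A (e n)} → L.DPolicy := fun a => Function.update π' (e n) a with hu
  have hinj : Function.Injective u := fun a b hab => by
    have := congrFun hab (e n)
    simpa [u, Function.update_self] using this
  have hcond : ∀ π : L.DPolicy, (∀ m, m ≠ n → π' (e m) = π (e m)) ↔ ∃ a, u a = π := by
    intro π
    constructor
    · intro h
      refine ⟨π (e n), funext fun s => ?_⟩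
      by_cases hs : s = e n
      · subst hs; simp [u, Function.update_self]
      · simp only [u]
        rw [Function.update_of_ne hs]
        have := h (e.symm s) (fun hc => hs (by rw [← e.apply_symm_apply s, hc]))
        rwa [e.apply_symm_apply] at this
    · rintro ⟨a, rfl⟩ m hm
      exact (Function.update_of_ne (e.injective.ne_iff.mpr hm) _ _).symm
  rw [← Finset.sum_filter]
  have himg : Finset.univ.filter (fun π : L.DPolicy => ∀ m, m ≠ n → π' (e m) = π (e m))
      = Finset.image u Finset.univ := by
    ext π
    simp only [Finset.mem_filter, Finset.mem_univ, true_and, Finset.mem_image, hcond π]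
  rw [himg, Finset.sum_image (fun a _ b _ h => hinj h)]
  refine Finset.sum_congr rfl fun a _ => ?_
  simp [u, Function.update_self]

end LearningSystem


/-- Stationarity of the softmax over coherence under Gibbs sampling: if `σ` has full
support and `β > 0`, then for every d-policy `π'`,
`∑_π X^β(π) · K^β(π,π') = X^β(π')`; i.e., `X^β` is a stationary distribution of the
Gibbs transition kernel `K^β`. -/
theorem gibbs_stationary {M S : Type} [AddCommMonoid M] [DecidableEq M]
    [Fintype S] [DecidableEq S] [Nonempty S] (L : LearningSystem M S)
    (hfs : L.FullSupport) {k : ℕ} (e : Fin k ≃ S) (β : ℝ) (hβ : 0 < β)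
    (π' : L.DPolicy) :
    ∑ π : L.DPolicy, L.softmaxCoh e β π * L.gibbsKernel e β π π' =
      L.softmaxCoh e β π' := by
  classical
  have hk0 : 0 < k := by
    have h1 : Fintype.card S = k := by
      rw [← Fintype.card_fin k]; exact (Fintype.card_congr e).symm
    have := Fintype.card_pos (α := S)
    omega
  have key : ∑ π : L.DPolicy, (2:ℝ) ^ (β * L.coherence e π) * L.gibbsKernel e β π π'
      = (2:ℝ) ^ (β * L.coherence e π') := by
    have step1 : ∑ π : L.DPolicy, (2:ℝ) ^ (β * L.coherence e π) * L.gibbsKernel e β π π'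
        = (k:ℝ)⁻¹ * ∑ n : Fin k, ∑ π : L.DPolicy, (2:ℝ) ^ (β * L.coherence e π) *
            (if ∀ m, m ≠ n → π' (e m) = π (e m) then
              L.sigmaBeta β (∑ m ∈ Finset.univ.erase n, ((π (e m) : M))) (e n)
                ((π' (e n) : M))
            else 0) := by
      have hterm : ∀ π : L.DPolicy, (2:ℝ) ^ (β * L.coherence e π) * L.gibbsKernel e β π π'
          = (k:ℝ)⁻¹ * ∑ n : Fin k, (2:ℝ) ^ (β * L.coherence e π) *
              (if ∀ m, m ≠ n → π' (e m) = π (e m) then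
                L.sigmaBeta β (∑ m ∈ Finset.univ.erase n, ((π (e m) : M))) (e n)
                  ((π' (e n) : M))
              else 0) := by
        intro π
        rw [LearningSystem.gibbsKernel, mul_left_comm, Finset.mul_sum]
      rw [Finset.sum_congr rfl (fun π _ => hterm π), ← Finset.mul_sum, Finset.sum_comm]
    rw [step1]
    have inner : ∀ n : Fin k, (∑ π : L.DPolicy, (2:ℝ) ^ (β * L.coherence e π) *
        (if ∀ m, m ≠ n → π' (e m) = π (e m) then
          L.sigmaBeta β (∑ m ∈ Finset.univ.erase n, ((π (e m) : M))) (e n) ((π' (e n) : M))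
        else 0)) = (2:ℝ) ^ (β * L.coherence e π') := by
      intro n
      have e1 : ∀ π : L.DPolicy, (2:ℝ) ^ (β * L.coherence e π) *
          (if ∀ m, m ≠ n → π' (e m) = π (e m) then
            L.sigmaBeta β (∑ m ∈ Finset.univ.erase n, ((π (e m) : M))) (e n) ((π' (e n) : M))
          else 0)
          = (if ∀ m, m ≠ n → π' (e m) = π (e m) then
              (2:ℝ) ^ (β * L.coherence e π') *
                L.sigmaBeta β (∑ m ∈ Finset.univ.erase n, ((π' (e m) : M))) (e n)
                  ((π (e n) : M))
            else 0) := by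
        intro π
        by_cases hc : ∀ m, m ≠ n → π' (e m) = π (e m)
        · rw [if_pos hc, if_pos hc]
          have hφ : (∑ m ∈ Finset.univ.erase n, ((π' (e m) : M)))
              = ∑ m ∈ Finset.univ.erase n, ((π (e m) : M)) :=
            Finset.sum_congr rfl fun m hm => by rw [hc m (Finset.ne_of_mem_erase hm)]
          rw [hφ, LearningSystem.sigmaBeta, LearningSystem.sigmaBeta, ← mul_div_assoc, ← mul_div_assoc,
            L.detailed_balance hfs e β n π π' hc]
        · rw [if_neg hc, if_neg hc, mul_zero]
      rw [Finset.sum_congr rfl (fun π _ => e1 π)]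
      rw [L.sum_ite_update e π' n (fun a => (2:ℝ) ^ (β * L.coherence e π') *
        L.sigmaBeta β (∑ m ∈ Finset.univ.erase n, ((π' (e m) : M))) (e n) ((a : M)))]
      rw [← Finset.mul_sum]
      have : (∑ a : {a : M // a ∈ L.A (e n)},
          L.sigmaBeta β (∑ m ∈ Finset.univ.erase n, ((π' (e m) : M))) (e n) ((a : M))) = 1 := by
        rw [Finset.sum_coe_sort (L.A (e n))
          (L.sigmaBeta β (∑ m ∈ Finset.univ.erase n, ((π' (e m) : M))) (e n))]
        exact L.sigmaBeta_sum hfs β _ _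
      rw [this, mul_one]
    rw [Finset.sum_congr rfl (fun n _ => inner n), Finset.sum_const, Finset.card_univ,
      Fintype.card_fin, nsmul_eq_mul, ← mul_assoc,
      inv_mul_cancel₀ (by exact_mod_cast hk0.ne'), one_mul]
  simp only [LearningSystem.softmaxCoh, div_mul_eq_mul_div]
  rw [← Finset.sum_div, key]
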